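/- For every β > 0 and K > 0: min_{z ∈ [−1,1]} {J_β(z) − βK z²} = min_{z ∈ ℝ} G_{β,K}(z); both minima are attained; and the set of global minimum points of z ↦ J_β(z) − βK z² over [−1,1] coincides with the set of global minimum points of G_{β,K} over ℝ. -/

import Mathlib

noncomputable section

/-- `c_β(t) = log[(1 + e^{−β}(e^t + e^{−t}))/(1 + 2e^{−β})]`. -/
def cBeta (β t : ℝ) : ℝ :=
  Real.log ((1 + Real.exp (-β) * (Real.exp t + Real.exp (-t))) / (1 + 2 * Real.exp (-β)))

/-- `J_β(z) = sup_{t ∈ ℝ} {t z − c_β(t)}`, the Legendre–Fenchel transform of `c_β`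
(finite on `[-1,1]`, where it is used below). -/
def Jbeta (β z : ℝ) : ℝ := ⨆ t : ℝ, (t * z - cBeta β t)

/-- `G_{β,K}(z) = βK z² − c_β(2βK z)`. -/
def Gfun (β K z : ℝ) : ℝ := β * K * z ^ 2 - cBeta β (2 * β * K * z)

open Real Set

/-- derivative of `cBeta β`. -/
def cD (β t : ℝ) : ℝ :=
  Real.exp (-β) * (Real.exp t - Real.exp (-t)) / (1 + Real.exp (-β) * (Real.exp t + Real.exp (-t)))

lemma D_pos (β t : ℝ) : 0 < 1 + Real.exp (-β) * (Real.exp t + Real.exp (-t)) := by positivity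

lemma den_pos (β : ℝ) : 0 < 1 + 2 * Real.exp (-β) := by positivity

lemma cBeta_eq (β t : ℝ) : cBeta β t =
    Real.log (1 + Real.exp (-β) * (Real.exp t + Real.exp (-t))) -
      Real.log (1 + 2 * Real.exp (-β)) := by
  rw [cBeta, Real.log_div (D_pos β t).ne' (den_pos β).ne']

lemma hasDerivAt_expneg (t : ℝ) : HasDerivAt (fun t : ℝ => Real.exp (-t)) (-Real.exp (-t)) t := by
  simpa using ((hasDerivAt_id t).neg).exp

lemma hasDerivAt_D (β t : ℝ) :
    HasDerivAt (fun t : ℝ => 1 + Real.exp (-β) * (Real.exp t + Real.exp (-t)))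
      (Real.exp (-β) * (Real.exp t - Real.exp (-t))) t := by
  have h := (((Real.hasDerivAt_exp t).add (hasDerivAt_expneg t)).const_mul
    (Real.exp (-β))).const_add 1
  simpa [mul_sub, sub_eq_add_neg] using h

lemma hasDerivAt_cBeta (β t : ℝ) : HasDerivAt (cBeta β) (cD β t) t := by
  have h := ((hasDerivAt_D β t).log (D_pos β t).ne').sub_const (Real.log (1 + 2 * Real.exp (-β)))
  have he : cBeta β = fun t => Real.log (1 + Real.exp (-β) * (Real.exp t + Real.exp (-t))) -
      Real.log (1 + 2 * Real.exp (-β)) := funext fun t => cBeta_eq β t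
  rw [he]; exact h

lemma hasDerivAt_cD (β t : ℝ) :
    HasDerivAt (cD β)
      ((Real.exp (-β) * (Real.exp t + Real.exp (-t)) *
          (1 + Real.exp (-β) * (Real.exp t + Real.exp (-t))) -
        Real.exp (-β) * (Real.exp t - Real.exp (-t)) *
          (Real.exp (-β) * (Real.exp t - Real.exp (-t)))) /
        (1 + Real.exp (-β) * (Real.exp t + Real.exp (-t))) ^ 2) t := by
  have hN : HasDerivAt (fun t : ℝ => Real.exp (-β) * (Real.exp t - Real.exp (-t)))
      (Real.exp (-β) * (Real.exp t + Real.exp (-t))) t := by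
    have h := ((Real.hasDerivAt_exp t).sub (hasDerivAt_expneg t)).const_mul (Real.exp (-β))
    simpa [mul_add, sub_neg_eq_add] using h
  exact hN.div (hasDerivAt_D β t) (D_pos β t).ne'

lemma exp_mul_expneg (t : ℝ) : Real.exp t * Real.exp (-t) = 1 := by
  rw [← Real.exp_add]; simp

lemma cD_strictMono (β : ℝ) : StrictMono (cD β) := by
  apply strictMono_of_deriv_pos
  intro t
  rw [(hasDerivAt_cD β t).deriv]
  have h1 := (Real.exp_pos t)
  have h2 := (Real.exp_pos (-t))
  have h3 := (Real.exp_pos (-β))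
  have h4 := exp_mul_expneg t
  have hD := D_pos β t
  apply div_pos
  · have hkey : Real.exp (-β) * (Real.exp t + Real.exp (-t)) *
          (1 + Real.exp (-β) * (Real.exp t + Real.exp (-t))) -
        Real.exp (-β) * (Real.exp t - Real.exp (-t)) *
          (Real.exp (-β) * (Real.exp t - Real.exp (-t))) =
        Real.exp (-β) * (Real.exp t + Real.exp (-t)) +
          4 * Real.exp (-β) ^ 2 * (Real.exp t * Real.exp (-t)) := by ring
    rw [hkey, h4]
    positivity
  · positivity

lemma convexOn_cBeta (β : ℝ) : ConvexOn ℝ univ (cBeta β) := by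
  have hdiff : Differentiable ℝ (cBeta β) := fun t => (hasDerivAt_cBeta β t).differentiableAt
  have hderiv : deriv (cBeta β) = cD β := funext fun t => (hasDerivAt_cBeta β t).deriv
  exact Monotone.convexOn_univ_of_deriv hdiff (hderiv ▸ (cD_strictMono β).monotone)

lemma cBeta_tangent (β s t : ℝ) : cBeta β s + cD β s * (t - s) ≤ cBeta β t := by
  rcases lt_trichotomy s t with h | h | h
  · have := (convexOn_cBeta β).le_slope_of_hasDerivAt (mem_univ s) (mem_univ t) h
      (hasDerivAt_cBeta β s)
    rw [slope_def_field] at this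
    have ht : 0 < t - s := by linarith
    have h2 := (le_div_iff₀ ht).mp this
    linarith
  · simp [h]
  · have := (convexOn_cBeta β).slope_le_of_hasDerivAt (mem_univ t) (mem_univ s) h
      (hasDerivAt_cBeta β s)
    rw [slope_def_field] at this
    have ht : 0 < s - t := by linarith
    have h2 := (div_le_iff₀ ht).mp this
    nlinarith [h2]

lemma cBeta_le_abs (β t : ℝ) : cBeta β t ≤ |t| := by
  rw [cBeta]
  have e1 : Real.exp t ≤ Real.exp |t| := Real.exp_le_exp.mpr (le_abs_self t)
  have e2 : Real.exp (-t) ≤ Real.exp |t| := Real.exp_le_exp.mpr (neg_le_abs t)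
  have e3 : (1:ℝ) ≤ Real.exp |t| := Real.one_le_exp (abs_nonneg t)
  have h3 := Real.exp_pos (-β)
  have h1 : (1 + Real.exp (-β) * (Real.exp t + Real.exp (-t))) / (1 + 2 * Real.exp (-β)) ≤
      Real.exp |t| := by
    rw [div_le_iff₀ (den_pos β)]
    nlinarith
  calc Real.log ((1 + Real.exp (-β) * (Real.exp t + Real.exp (-t))) / (1 + 2 * Real.exp (-β)))
      ≤ Real.log (Real.exp |t|) :=
        Real.log_le_log (div_pos (D_pos β t) (den_pos β)) h1
    _ = |t| := Real.log_exp _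

lemma le_cBeta (β t : ℝ) : |t| - β - Real.log (1 + 2 * Real.exp (-β)) ≤ cBeta β t := by
  rw [cBeta_eq]
  have h1 : Real.exp (|t| - β) ≤ 1 + Real.exp (-β) * (Real.exp t + Real.exp (-t)) := by
    have he : Real.exp (|t| - β) = Real.exp (-β) * Real.exp |t| := by
      rw [← Real.exp_add]; ring_nf
    have h2 : Real.exp |t| ≤ Real.exp t + Real.exp (-t) := by
      rcases abs_cases t with ⟨h, _⟩ | ⟨h, _⟩ <;> rw [h] <;>
        nlinarith [Real.exp_pos t, Real.exp_pos (-t)]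
    have h3 := (Real.exp_pos (-β)).le
    nlinarith
  have h4 : |t| - β = Real.log (Real.exp (|t| - β)) := (Real.log_exp _).symm
  rw [h4]
  have := Real.log_le_log (Real.exp_pos _) h1
  linarith

lemma cD_abs_le (β t : ℝ) : |cD β t| ≤ 1 := by
  rw [cD, abs_div, abs_of_pos (D_pos β t), div_le_one (D_pos β t)]
  have h1 : |Real.exp (-β) * (Real.exp t - Real.exp (-t))| ≤
      Real.exp (-β) * (Real.exp t + Real.exp (-t)) := by
    rw [abs_mul, abs_of_pos (Real.exp_pos _)]
    have e1 := (Real.exp_pos t).le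
    have e2 := (Real.exp_pos (-t)).le
    have h2 : |Real.exp t - Real.exp (-t)| ≤ Real.exp t + Real.exp (-t) := by
      rw [abs_sub_le_iff]; constructor <;> linarith
    exact mul_le_mul_of_nonneg_left h2 (Real.exp_pos (-β)).le
  linarith

lemma bddAbove_J (β z : ℝ) (hz : |z| ≤ 1) :
    BddAbove (Set.range fun t => t * z - cBeta β t) := by
  refine ⟨β + Real.log (1 + 2 * Real.exp (-β)), ?_⟩
  rintro x ⟨t, rfl⟩
  have h1 := le_cBeta β t
  have h2 : t * z ≤ |t| := by
    calc t * z ≤ |t * z| := le_abs_self _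
      _ = |t| * |z| := abs_mul t z
      _ ≤ |t| * 1 := mul_le_mul_of_nonneg_left hz (abs_nonneg t)
      _ = |t| := mul_one _
  simp only
  linarith

lemma le_Jbeta (β z : ℝ) (hz : |z| ≤ 1) (t : ℝ) : t * z - cBeta β t ≤ Jbeta β z :=
  le_ciSup (bddAbove_J β z hz) t

lemma Jbeta_at (β t₀ : ℝ) : Jbeta β (cD β t₀) = t₀ * cD β t₀ - cBeta β t₀ := by
  have hz := cD_abs_le β t₀
  apply le_antisymm
  · apply ciSup_le
    intro t
    have h := cBeta_tangent β t₀ t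
    have h2 : cD β t₀ * (t - t₀) = t * cD β t₀ - t₀ * cD β t₀ := by ring
    linarith
  · exact le_Jbeta β _ hz t₀

lemma hasDerivAt_G (β K z : ℝ) :
    HasDerivAt (Gfun β K) (2 * β * K * z - cD β (2 * β * K * z) * (2 * β * K)) z := by
  have h1 : HasDerivAt (fun z : ℝ => β * K * z ^ 2) (2 * β * K * z) z := by
    have h : HasDerivAt (fun z : ℝ => β * K * z ^ 2) (β * K * (((2:ℕ):ℝ) * z ^ (2 - 1))) z :=
      (hasDerivAt_pow 2 z).const_mul (β * K)
    convert h using 1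
    push_cast
    ring
  have hl : HasDerivAt (fun z : ℝ => 2 * β * K * z) (2 * β * K) z := by
    simpa using (hasDerivAt_id z).const_mul (2 * β * K)
  have h2 : HasDerivAt (fun z : ℝ => cBeta β (2 * β * K * z))
      (cD β (2 * β * K * z) * (2 * β * K)) z :=
    (hasDerivAt_cBeta β (2 * β * K * z)).comp z hl
  exact h1.sub h2

lemma continuous_G (β K : ℝ) : Continuous (Gfun β K) :=
  continuous_iff_continuousAt.mpr fun z =>
    (hasDerivAt_G β K z).differentiableAt.continuousAt

lemma minG_stationary (β K : ℝ) (hβ : 0 < β) (hK : 0 < K) {z : ℝ}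
    (hz : IsMinOn (Gfun β K) Set.univ z) : z = cD β (2 * β * K * z) := by
  have hloc : IsLocalMin (Gfun β K) z :=
    Filter.Eventually.of_forall fun x => isMinOn_iff.mp hz x (mem_univ x)
  have h0 := hloc.hasDerivAt_eq_zero (hasDerivAt_G β K z)
  have hβK : (0:ℝ) < 2 * β * K := by positivity
  have h1 : (2 * β * K) * (z - cD β (2 * β * K * z)) = 0 := by linear_combination h0
  rcases mul_eq_zero.mp h1 with h | h
  · exact absurd h hβK.ne'
  · linarith [sub_eq_zero.mp h]

lemma cBeta_zero (β : ℝ) : cBeta β 0 = 0 := by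
  rw [cBeta]
  have : 1 + Real.exp (-β) * (Real.exp 0 + Real.exp (-0)) = 1 + 2 * Real.exp (-β) := by
    rw [neg_zero, Real.exp_zero]; ring
  rw [this, div_self (den_pos β).ne', Real.log_one]

lemma exists_minG (β K : ℝ) (hβ : 0 < β) (hK : 0 < K) :
    ∃ z, IsMinOn (Gfun β K) Set.univ z := by
  obtain ⟨z₀, hmem, hz₀⟩ := (isCompact_Icc (a := (-3:ℝ)) (b := 3)).exists_isMinOn
    ⟨0, by norm_num⟩ (continuous_G β K).continuousOn
  refine ⟨z₀, isMinOn_iff.mpr fun z _ => ?_⟩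
  by_cases hz : z ∈ Icc (-3:ℝ) 3
  · exact isMinOn_iff.mp hz₀ z hz
  · have habs : 3 ≤ |z| := by
      rw [mem_Icc, not_and_or, not_le, not_le] at hz
      rcases hz with h | h
      · rw [abs_of_neg (by linarith)]; linarith
      · rw [abs_of_pos (by linarith)]; linarith
    have hG0 : Gfun β K z₀ ≤ 0 := by
      have h := isMinOn_iff.mp hz₀ 0 (by norm_num)
      simpa [Gfun, cBeta_zero] using h
    have hGz : 0 ≤ Gfun β K z := by
      have hc := cBeta_le_abs β (2 * β * K * z)
      have habs2 : |2 * β * K * z| = 2 * β * K * |z| := by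
        rw [abs_mul, abs_of_pos (by positivity : (0:ℝ) < 2 * β * K)]
      have hz2 : |z| ^ 2 = z ^ 2 := sq_abs z
      rw [Gfun]
      nlinarith [mul_pos hβ hK, abs_nonneg z,
        mul_nonneg (mul_nonneg hβ.le hK.le)
          (mul_nonneg (by linarith : (0:ℝ) ≤ |z| - 3) (abs_nonneg z))]
    linarith

lemma minG_key (β K : ℝ) (hβ : 0 < β) (hK : 0 < K) {z : ℝ}
    (hz : IsMinOn (Gfun β K) Set.univ z) :
    z ∈ Icc (-1:ℝ) 1 ∧ Jbeta β z - β * K * z ^ 2 = Gfun β K z := by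
  have hst := minG_stationary β K hβ hK hz
  have habs : |z| ≤ 1 := by rw [hst]; exact cD_abs_le β (2 * β * K * z)
  refine ⟨mem_Icc.mpr (abs_le.mp habs), ?_⟩
  have hJ : Jbeta β z = (2 * β * K * z) * z - cBeta β (2 * β * K * z) := by
    have h := Jbeta_at β (2 * β * K * z)
    rw [← hst] at h
    exact h
  rw [hJ, Gfun]; ring

lemma G_le_F (β K : ℝ) {z : ℝ} (hz : z ∈ Icc (-1:ℝ) 1) :
    Gfun β K z ≤ Jbeta β z - β * K * z ^ 2 := by
  have habs : |z| ≤ 1 := abs_le.mpr ⟨hz.1, hz.2⟩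
  have h := le_Jbeta β z habs (2 * β * K * z)
  have h2 : (2 * β * K * z) * z = 2 * (β * K * z ^ 2) := by ring
  rw [Gfun]
  linarith


/-- For all `β > 0`, `K > 0`: the minimum of `J_β(z) − βKz²` over
`[-1,1]` and the minimum of `G_{β,K}` over `ℝ` are both attained and equal, and the
two sets of global minimum points coincide. -/
theorem min_J_eq_min_G (β K : ℝ) (hβ : 0 < β) (hK : 0 < K) :
    (∃ z ∈ Set.Icc (-1 : ℝ) 1,
      IsMinOn (fun z => Jbeta β z - β * K * z ^ 2) (Set.Icc (-1 : ℝ) 1) z) ∧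
    (∃ z : ℝ, IsMinOn (Gfun β K) Set.univ z) ∧
    sInf ((fun z => Jbeta β z - β * K * z ^ 2) '' Set.Icc (-1 : ℝ) 1) =
      sInf (Set.range (Gfun β K)) ∧
    {z : ℝ | z ∈ Set.Icc (-1 : ℝ) 1 ∧
        IsMinOn (fun z => Jbeta β z - β * K * z ^ 2) (Set.Icc (-1 : ℝ) 1) z} =
      {z : ℝ | IsMinOn (Gfun β K) Set.univ z} := by
  set F : ℝ → ℝ := fun z => Jbeta β z - β * K * z ^ 2 with hF
  obtain ⟨z₀, hz₀⟩ := exists_minG β K hβ hK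
  obtain ⟨hz₀Icc, hz₀F⟩ := minG_key β K hβ hK hz₀
  have hminF : IsMinOn F (Set.Icc (-1 : ℝ) 1) z₀ := by
    refine isMinOn_iff.mpr fun x hx => ?_
    calc F z₀ = Gfun β K z₀ := hz₀F
      _ ≤ Gfun β K x := isMinOn_iff.mp hz₀ x (mem_univ x)
      _ ≤ F x := G_le_F β K hx
  refine ⟨⟨z₀, hz₀Icc, hminF⟩, ⟨z₀, hz₀⟩, ?_, ?_⟩
  · have h1 : IsLeast (F '' Set.Icc (-1 : ℝ) 1) (F z₀) :=
      ⟨⟨z₀, hz₀Icc, rfl⟩, by rintro x ⟨y, hy, rfl⟩; exact isMinOn_iff.mp hminF y hy⟩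
    have h2 : IsLeast (Set.range (Gfun β K)) (Gfun β K z₀) :=
      ⟨⟨z₀, rfl⟩, by rintro x ⟨y, rfl⟩; exact isMinOn_iff.mp hz₀ y (mem_univ y)⟩
    rw [h1.csInf_eq, h2.csInf_eq]; exact hz₀F
  · ext z
    simp only [Set.mem_setOf_eq]
    constructor
    · rintro ⟨hzIcc, hzmin⟩
      have hFz : F z = Gfun β K z₀ := by
        have ha : F z ≤ F z₀ := isMinOn_iff.mp hzmin z₀ hz₀Icc
        have hb : F z₀ ≤ F z := isMinOn_iff.mp hminF z hzIcc
        have hc : F z₀ = Gfun β K z₀ := hz₀F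
        linarith
      have hGz : Gfun β K z = Gfun β K z₀ := by
        have ha : Gfun β K z ≤ F z := G_le_F β K hzIcc
        have hb : Gfun β K z₀ ≤ Gfun β K z := isMinOn_iff.mp hz₀ z (mem_univ z)
        linarith
      exact isMinOn_iff.mpr fun x _ => hGz ▸ isMinOn_iff.mp hz₀ x (mem_univ x)
    · intro hzmin
      obtain ⟨hzIcc, hzF⟩ := minG_key β K hβ hK hzmin
      refine ⟨hzIcc, isMinOn_iff.mpr fun x hx => ?_⟩
      calc F z = Gfun β K z := hzF
        _ ≤ Gfun β K x := isMinOn_iff.mp hzmin x (mem_univ x)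
        _ ≤ F x := G_le_F β K hx
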